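/- Let G be a finite simple graph with maximum degree Δ(G) = 4, and suppose every proper subgraph H of G satisfies χ_i(H) ≤ 6. If G contains a vertex of degree 3 that is adjacent to one vertex of degree 2 and to two vertices of degree 3, then χ_i(G) ≤ 6. -/

import Mathlib

open SimpleGraph

/-- An injective coloring of `G`: any two distinct vertices with a common neighbor
receive distinct colors. -/
def IsInjColoring {V α : Type*} (G : SimpleGraph V) (c : V → α) : Prop :=
  ∀ ⦃u v : V⦄, u ≠ v → (∃ w, G.Adj u w ∧ G.Adj v w) → c u ≠ c v

/-- The injective chromatic number of `G`: the least `k` such that `G` has an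
injective coloring with `k` colors. -/
noncomputable def injChromNum {V : Type*} (G : SimpleGraph V) : ℕ :=
  sInf {k | ∃ c : V → Fin k, IsInjColoring G c}

/-- The subgraph of `G` obtained by deleting the edge `uv` (keeping all vertices). -/
def delEdge {V : Type*} (G : SimpleGraph V) (u v : V) : G.Subgraph where
  verts := Set.univ
  Adj a b := G.Adj a b ∧ ¬ s(a, b) = s(u, v)
  adj_sub h := h.1
  edge_vert _ := trivial
  symm := ⟨fun a b h => ⟨h.1.symm, by rw [Sym2.eq_swap]; exact h.2⟩⟩

lemma extract_coloring {V' : Type*} [Fintype V'] (G' : SimpleGraph V')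
    (h : injChromNum G' ≤ 6) : ∃ c : V' → Fin 6, IsInjColoring G' c := by
  classical
  have hne : {k | ∃ c : V' → Fin k, IsInjColoring G' c}.Nonempty := by
    refine ⟨Fintype.card V', fun v => (Fintype.equivFin V') v, ?_⟩
    intro a b hab _ hc
    exact hab ((Fintype.equivFin V').injective hc)
  have hmem := Nat.sInf_mem hne
  obtain ⟨c, hc⟩ := hmem
  have hle : sInf {k | ∃ c : V' → Fin k, IsInjColoring G' c} ≤ 6 := h
  refine ⟨fun v => Fin.castLE hle (c v), ?_⟩
  intro a b hab hw hcc
  exact hc hab hw (Fin.castLE_injective hle hcc)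

lemma exists_avoid {V : Type*} [DecidableEq V] (S : Finset V) (c : V → Fin 6)
    (hS : S.card ≤ 5) : ∃ α : Fin 6, ∀ w ∈ S, c w ≠ α := by
  by_contra hcon
  push_neg at hcon
  have hsub : (Finset.univ : Finset (Fin 6)) ⊆ S.image c := by
    intro α _
    obtain ⟨w, hw, hcw⟩ := hcon α
    exact Finset.mem_image.mpr ⟨w, hw, hcw⟩
  have h1 := Finset.card_le_card hsub
  have h2 := Finset.card_image_le (s := S) (f := c)
  simp at h1
  omega

theorem rc4_maxDegree_four {V : Type*} [Fintype V] (G : SimpleGraph V)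
    [DecidableRel G.Adj] (hΔ : G.maxDegree = 4)
    (hmin : ∀ H : G.Subgraph, H ≠ ⊤ → injChromNum H.coe ≤ 6)
    (h : ∃ u v x y : V, G.degree u = 3 ∧ G.Adj u v ∧ G.Adj u x ∧ G.Adj u y ∧
      v ≠ x ∧ v ≠ y ∧ x ≠ y ∧ G.degree v = 2 ∧ G.degree x = 3 ∧ G.degree y = 3) :
    injChromNum G ≤ 6 := by
  classical
  obtain ⟨u, v, x, y, hdu, huv, hux, huy, hvx, hvy, hxy, hdv, hdx, hdy⟩ := h
  set H : G.Subgraph := delEdge G u v with hH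
  have hHne : H ≠ ⊤ := by
    intro htop
    have : H.Adj u v := by rw [htop]; simpa using huv
    exact this.2 rfl
  have hHle := hmin H hHne
  haveI : Fintype ↥H.verts := by
    simpa [hH, delEdge] using (Set.fintypeUniv (α := V))
  obtain ⟨c, hc⟩ := extract_coloring H.coe hHle
  -- transport to V
  set c0 : V → Fin 6 := fun s => c ⟨s, trivial⟩ with hc0def
  have hc0 : ∀ a b : V, a ≠ b → (∃ w, H.Adj a w ∧ H.Adj b w) → c0 a ≠ c0 b := by
    rintro a b hab ⟨w, h1, h2⟩
    have : (⟨a, trivial⟩ : ↥H.verts) ≠ ⟨b, trivial⟩ := by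
      simp [Subtype.ext_iff]; exact hab
    exact hc this ⟨⟨w, trivial⟩, h1, h2⟩
  -- neighbor structure
  have hNu : G.neighborFinset u = {v, x, y} := by
    refine (Finset.eq_of_subset_of_card_le ?_ ?_).symm
    · intro s hs
      simp only [Finset.mem_insert, Finset.mem_singleton] at hs
      rcases hs with rfl | rfl | rfl
      · exact (mem_neighborFinset G u s).mpr huv
      · exact (mem_neighborFinset G u s).mpr hux
      · exact (mem_neighborFinset G u s).mpr huy
    · rw [card_neighborFinset_eq_degree, hdu]
      rw [Finset.card_insert_of_notMem (by simp [hvx, hvy]),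
        Finset.card_insert_of_notMem (by simp [hxy]), Finset.card_singleton]
  -- the second neighbor of v
  obtain ⟨z, hzu, hNv⟩ : ∃ z, z ≠ u ∧ G.neighborFinset v = {u, z} := by
    have h2 : (G.neighborFinset v).card = 2 := by
      rw [card_neighborFinset_eq_degree, hdv]
    obtain ⟨p, q, hpq, hpqeq⟩ := Finset.card_eq_two.mp h2
    have hu : u ∈ G.neighborFinset v := (mem_neighborFinset G v u).mpr huv.symm
    rw [hpqeq] at hu
    simp only [Finset.mem_insert, Finset.mem_singleton] at hu
    rcases hu with rfl | rfl
    · exact ⟨q, fun hq => hpq hq.symm, hpqeq⟩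
    · exact ⟨p, fun hp => hpq hp, by rw [hpqeq, Finset.pair_comm]⟩
  have hvz : G.Adj v z := by
    have : z ∈ G.neighborFinset v := by rw [hNv]; simp
    exact (mem_neighborFinset G v z).mp this
  have hzv : z ≠ v := fun hzv => G.irrefl (hzv ▸ hvz)
  -- conflict sets
  set Su : Finset V := Finset.univ.filter (fun s => s ≠ u ∧ ∃ n, G.Adj u n ∧ G.Adj s n)
    with hSudef
  set Sv : Finset V := Finset.univ.filter (fun s => s ≠ v ∧ ∃ n, G.Adj v n ∧ G.Adj s n)
    with hSvdef
  have cardErase : ∀ a b : V, G.Adj a b →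
      ((G.neighborFinset a).erase b).card = G.degree a - 1 := by
    intro a b hab
    rw [Finset.card_erase_of_mem ((mem_neighborFinset G a b).mpr hab),
      card_neighborFinset_eq_degree]
  have hSu_card : Su.card ≤ 5 := by
    have hsub : Su ⊆ ((G.neighborFinset v).erase u) ∪ ((G.neighborFinset x).erase u)
        ∪ ((G.neighborFinset y).erase u) := by
      intro s hs
      rw [hSudef, Finset.mem_filter] at hs
      obtain ⟨-, hsu, n, hun, hsn⟩ := hs
      have hn : n ∈ ({v, x, y} : Finset V) := by
        rw [← hNu]; exact (mem_neighborFinset G u n).mpr hun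
      simp only [Finset.mem_insert, Finset.mem_singleton] at hn
      simp only [Finset.mem_union, Finset.mem_erase, mem_neighborFinset]
      rcases hn with rfl | rfl | rfl
      · exact Or.inl (Or.inl ⟨hsu, hsn.symm⟩)
      · exact Or.inl (Or.inr ⟨hsu, hsn.symm⟩)
      · exact Or.inr ⟨hsu, hsn.symm⟩
    have := Finset.card_le_card hsub
    have h1 := Finset.card_union_le (((G.neighborFinset v).erase u) ∪ ((G.neighborFinset x).erase u)) ((G.neighborFinset y).erase u)
    have h2 := Finset.card_union_le ((G.neighborFinset v).erase u) ((G.neighborFinset x).erase u)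
    have e1 := cardErase v u huv.symm
    have e2 := cardErase x u hux.symm
    have e3 := cardErase y u huy.symm
    rw [hdv] at e1; rw [hdx] at e2; rw [hdy] at e3
    omega
  have hSv_card : Sv.card ≤ 5 := by
    have hsub : Sv ⊆ ((G.neighborFinset u).erase v) ∪ ((G.neighborFinset z).erase v) := by
      intro s hs
      rw [hSvdef, Finset.mem_filter] at hs
      obtain ⟨-, hsv, n, hvn, hsn⟩ := hs
      have hn : n ∈ ({u, z} : Finset V) := by
        rw [← hNv]; exact (mem_neighborFinset G v n).mpr hvn
      simp only [Finset.mem_insert, Finset.mem_singleton] at hn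
      simp only [Finset.mem_union, Finset.mem_erase, mem_neighborFinset]
      rcases hn with rfl | rfl
      · exact Or.inl ⟨hsv, hsn.symm⟩
      · exact Or.inr ⟨hsv, hsn.symm⟩
    have := Finset.card_le_card hsub
    have h1 := Finset.card_union_le ((G.neighborFinset u).erase v) ((G.neighborFinset z).erase v)
    have e1 := cardErase u v huv
    have e2 := cardErase z v hvz.symm
    have hz4 : G.degree z ≤ 4 := hΔ ▸ G.degree_le_maxDegree z
    rw [hdu] at e1
    omega
  -- recolor u then v
  obtain ⟨α, hα⟩ := exists_avoid Su c0 hSu_card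
  set c1 : V → Fin 6 := Function.update c0 u α with hc1def
  obtain ⟨β, hβ⟩ := exists_avoid Sv c1 hSv_card
  set c2 : V → Fin 6 := Function.update c1 v β with hc2def
  have hc2v : c2 v = β := Function.update_self v β c1
  have hc2ne : ∀ s, s ≠ v → c2 s = c1 s := fun s hs => Function.update_of_ne hs β c1
  have hc1u : c1 u = α := Function.update_self u α c0
  have hc1ne : ∀ s, s ≠ u → c1 s = c0 s := fun s hs => Function.update_of_ne hs α c0
  have hvu : v ≠ u := fun hvu => G.irrefl (hvu ▸ huv)
  -- the final coloring is injective for G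
  refine Nat.sInf_le ⟨c2, ?_⟩
  rintro a b hab ⟨w, haw, hbw⟩
  have memSv : ∀ s w', s ≠ v → G.Adj v w' → G.Adj s w' → s ∈ Sv := by
    intro s w' h1 h2 h3
    rw [hSvdef, Finset.mem_filter]
    exact ⟨Finset.mem_univ s, h1, w', h2, h3⟩
  have memSu : ∀ s w', s ≠ u → G.Adj u w' → G.Adj s w' → s ∈ Su := by
    intro s w' h1 h2 h3
    rw [hSudef, Finset.mem_filter]
    exact ⟨Finset.mem_univ s, h1, w', h2, h3⟩
  by_cases hav : a = v
  · subst hav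
    have hbv : b ≠ a := hab.symm
    have hb : b ∈ Sv := memSv b w hbv haw hbw
    rw [hc2v, hc2ne b hbv]
    exact fun hcc => hβ b hb hcc.symm
  · by_cases hbv : b = v
    · subst hbv
      have ha : a ∈ Sv := memSv a w hav hbw haw
      rw [hc2v, hc2ne a hav]
      exact hβ a ha
    · -- neither is v
      rw [hc2ne a hav, hc2ne b hbv]
      by_cases hau : a = u
      · subst hau
        have hb : b ∈ Su := memSu b w hab.symm haw hbw
        rw [hc1u, hc1ne b hab.symm]
        exact fun hcc => hα b hb hcc.symm
      · by_cases hbu : b = u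
        · subst hbu
          have ha : a ∈ Su := memSu a w hau hbw haw
          rw [hc1u, hc1ne a hau]
          exact hα a ha
        · -- neither is u or v: use the coloring of H
          rw [hc1ne a hau, hc1ne b hbu]
          have hne1 : ¬ s(a, w) = s(u, v) := by
            rw [Sym2.eq_iff]
            rintro (⟨rfl, rfl⟩ | ⟨rfl, rfl⟩)
            · exact hau rfl
            · exact hav rfl
          have hne2 : ¬ s(b, w) = s(u, v) := by
            rw [Sym2.eq_iff]
            rintro (⟨rfl, rfl⟩ | ⟨rfl, rfl⟩)
            · exact hbu rfl
            · exact hbv rfl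
          exact hc0 a b hab ⟨w, ⟨haw, hne1⟩, ⟨hbw, hne2⟩⟩
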